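/- For every integer i ≥ 1 there exists an optimal vector-linear (n,k,d,r)-LRC over F_2^2 with parameters (n,k,d,r) = (4i+4, 3i+1, 4, 3); that is, there exists an F_2-linear subspace C ⊆ (F_2^2)^{4i+4} with |C| = 4^{3i+1}, minimum Hamming distance 4 over the alphabet F_2^2, all-symbol locality r = 3, and 4 = n − k − ⌈k/r⌉ + 2. -/

import Mathlib

abbrev V2 : Type := ZMod 2 × ZMod 2
def am (x : V2) : V2 := (x.2, x.1 + x.2)
def a2 (x : V2) : V2 := (x.1 + x.2, x.1)

lemma am_add : ∀ x y : V2, am (x+y) = am x + am y := by decide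
lemma a2_add : ∀ x y : V2, a2 (x+y) = a2 x + a2 y := by decide
lemma am_smul : ∀ (r : ZMod 2) (x : V2), am (r • x) = r • am x := by decide
lemma a2_smul : ∀ (r : ZMod 2) (x : V2), a2 (r • x) = r • a2 x := by decide

def grpA (v : Fin 3 → V2) : V2 := v 1 + am (v 2) + a2 (v 0 + v 1 + v 2)
def grpB (v : Fin 3 → V2) : V2 := v 1 + a2 (v 2) + am (v 0 + v 1 + v 2)

lemma grpA_add (v w : Fin 3 → V2) : grpA (v + w) = grpA v + grpA w := by
  simp only [grpA, Pi.add_apply]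
  rw [show v 0 + w 0 + (v 1 + w 1) + (v 2 + w 2) = (v 0 + v 1 + v 2) + (w 0 + w 1 + w 2) by abel,
    am_add, a2_add]; abel
lemma grpB_add (v w : Fin 3 → V2) : grpB (v + w) = grpB v + grpB w := by
  simp only [grpB, Pi.add_apply]
  rw [show v 0 + w 0 + (v 1 + w 1) + (v 2 + w 2) = (v 0 + v 1 + v 2) + (w 0 + w 1 + w 2) by abel,
    am_add, a2_add]; abel
lemma grpA_smul (r : ZMod 2) (v : Fin 3 → V2) : grpA (r • v) = r • grpA v := by
  simp only [grpA, Pi.smul_apply]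
  rw [show r • v 0 + r • v 1 + r • v 2 = r • (v 0 + v 1 + v 2) by rw [smul_add, smul_add],
    am_smul, a2_smul, smul_add, smul_add]
lemma grpB_smul (r : ZMod 2) (v : Fin 3 → V2) : grpB (r • v) = r • grpB v := by
  simp only [grpB, Pi.smul_apply]
  rw [show r • v 0 + r • v 1 + r • v 2 = r • (v 0 + v 1 + v 2) by rw [smul_add, smul_add],
    am_smul, a2_smul, smul_add, smul_add]

section
variable (i : ℕ)

def AA (f : Fin i × Fin 3 → V2) : V2 := ∑ g : Fin i, grpA (fun j => f (g, j))
def BB (f : Fin i × Fin 3 → V2) : V2 := ∑ g : Fin i, grpB (fun j => f (g, j))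

lemma AA_add (f f' : Fin i × Fin 3 → V2) : AA i (f + f') = AA i f + AA i f' := by
  simp only [AA]; rw [← Finset.sum_add_distrib]
  exact Finset.sum_congr rfl fun g _ => grpA_add _ _
lemma BB_add (f f' : Fin i × Fin 3 → V2) : BB i (f + f') = BB i f + BB i f' := by
  simp only [BB]; rw [← Finset.sum_add_distrib]
  exact Finset.sum_congr rfl fun g _ => grpB_add _ _
lemma AA_smul (r : ZMod 2) (f : Fin i × Fin 3 → V2) : AA i (r • f) = r • AA i f := by
  simp only [AA]; rw [Finset.smul_sum]
  exact Finset.sum_congr rfl fun g _ => grpA_smul _ _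
lemma BB_smul (r : ZMod 2) (f : Fin i × Fin 3 → V2) : BB i (r • f) = r • BB i f := by
  simp only [BB]; rw [Finset.smul_sum]
  exact Finset.sum_congr rfl fun g _ => grpB_smul _ _

def enc (m : (Fin i × Fin 3 → V2) × V2) : Fin (i+1) × Fin 4 → V2 := fun x =>
  Fin.cases
    (![m.2 + AA i m.1 + BB i m.1, m.2, m.2 + am (AA i m.1) + a2 (BB i m.1),
       m.2 + a2 (AA i m.1) + am (BB i m.1)] x.2)
    (fun g => ![m.1 (g,0), m.1 (g,1), m.1 (g,2), m.1 (g,0) + m.1 (g,1) + m.1 (g,2)] x.2)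
    x.1

variable {i}

lemma enc_zero (m : (Fin i × Fin 3 → V2) × V2) (p : Fin 4) :
    enc i m (0, p) = ![m.2 + AA i m.1 + BB i m.1, m.2, m.2 + am (AA i m.1) + a2 (BB i m.1),
       m.2 + a2 (AA i m.1) + am (BB i m.1)] p := by
  simp [enc]

lemma enc_succ (m : (Fin i × Fin 3 → V2) × V2) (g : Fin i) (p : Fin 4) :
    enc i m (g.succ, p) = ![m.1 (g,0), m.1 (g,1), m.1 (g,2),
      m.1 (g,0) + m.1 (g,1) + m.1 (g,2)] p := by
  simp [enc]
end


section
variable (i : ℕ)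

set_option maxHeartbeats 1000000 in
def encL : ((Fin i × Fin 3 → V2) × V2) →ₗ[ZMod 2] ((Fin (i+1) × Fin 4) → V2) where
  toFun := enc i
  map_add' := by
    intro m m'
    have hA : AA i (m.1 + m'.1) = AA i m.1 + AA i m'.1 := AA_add i m.1 m'.1
    have hB : BB i (m.1 + m'.1) = BB i m.1 + BB i m'.1 := BB_add i m.1 m'.1
    funext x
    obtain ⟨g, p⟩ := x
    simp only [Pi.add_apply]
    induction g using Fin.cases with
    | zero =>
      rw [enc_zero, enc_zero, enc_zero]
      fin_cases p <;> simp [hA, hB, am_add, a2_add] <;> abel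
    | succ g =>
      rw [enc_succ, enc_succ, enc_succ]
      fin_cases p <;> simp <;> abel
  map_smul' := by
    intro r m
    have hA : AA i (r • m.1) = r • AA i m.1 := AA_smul i r m.1
    have hB : BB i (r • m.1) = r • BB i m.1 := BB_smul i r m.1
    funext x
    obtain ⟨g, p⟩ := x
    simp only [RingHom.id_apply, Pi.smul_apply]
    induction g using Fin.cases with
    | zero =>
      rw [enc_zero, enc_zero]
      fin_cases p <;> simp [hA, hB, am_smul, a2_smul, smul_add]
    | succ g =>
      rw [enc_succ, enc_succ]
      fin_cases p <;> simp [smul_add]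
end

lemma v2_add_self : ∀ a : V2, a + a = 0 := by decide
lemma spec_parity : ∀ t A B : V2, (t+A+B)+t+(t+am A+a2 B)+(t+a2 A+am B) = 0 := by decide
lemma AB_zero : ∀ A B : V2, A + B = 0 → am A + a2 B = 0 → A = 0 ∧ B = 0 := by decide
lemma grp_eq : ∀ a b c : V2, b + am c + a2 (a+b+c) = 0 → b + a2 c + am (a+b+c) = 0 →
    a = b ∧ b = c := by decide
lemma am_zero : am 0 = 0 := by decide
lemma a2_zero : a2 0 = 0 := by decide

section
variable {i : ℕ}

lemma encL_inj : Function.Injective (encL i) := by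
  intro m m' h
  have h' : ∀ x, enc i m x = enc i m' x := fun x => congrFun h x
  have ht : m.2 = m'.2 := by
    have := h' (0, 1)
    rwa [enc_zero, enc_zero] at this
  have hf : m.1 = m'.1 := by
    funext y
    obtain ⟨g, j⟩ := y
    fin_cases j
    · have := h' (g.succ, 0); rwa [enc_succ, enc_succ] at this
    · have := h' (g.succ, 1); rwa [enc_succ, enc_succ] at this
    · have := h' (g.succ, 2); rwa [enc_succ, enc_succ] at this
  exact Prod.ext hf ht

lemma enc_group_parity (m : (Fin i × Fin 3 → V2) × V2) (g : Fin (i+1)) :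
    enc i m (g, 0) + enc i m (g, 1) + enc i m (g, 2) + enc i m (g, 3) = 0 := by
  induction g using Fin.cases with
  | zero =>
    rw [enc_zero, enc_zero, enc_zero, enc_zero]
    exact spec_parity _ _ _
  | succ g =>
    rw [enc_succ, enc_succ, enc_succ, enc_succ]
    show m.1 (g,0) + m.1 (g,1) + m.1 (g,2) + (m.1 (g,0) + m.1 (g,1) + m.1 (g,2)) = 0
    exact v2_add_self _

lemma exists_second (v : Fin 4 → V2) (h : v 0 + v 1 + v 2 + v 3 = 0) (p : Fin 4)
    (hp : v p ≠ 0) : ∃ q, q ≠ p ∧ v q ≠ 0 := by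
  by_contra h'
  push_neg at h'
  apply hp
  fin_cases p
  · have h1 := h' 1 (by decide); have h2 := h' 2 (by decide); have h3 := h' 3 (by decide)
    simpa [h1, h2, h3] using h
  · have h1 := h' 0 (by decide); have h2 := h' 2 (by decide); have h3 := h' 3 (by decide)
    simpa [h1, h2, h3] using h
  · have h1 := h' 0 (by decide); have h2 := h' 1 (by decide); have h3 := h' 3 (by decide)
    simpa [h1, h2, h3] using h
  · have h1 := h' 0 (by decide); have h2 := h' 1 (by decide); have h3 := h' 2 (by decide)
    simpa [h1, h2, h3] using h
end

section
variable {i : ℕ}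

lemma group_all_nonzero (m : (Fin i × Fin 3 → V2) × V2) (g : Fin (i+1)) (p : Fin 4)
    (hgp : enc i m (g, p) ≠ 0) (hz : ∀ g2, g2 ≠ g → ∀ q, enc i m (g2, q) = 0) :
    ∀ q, enc i m (g, q) ≠ 0 := by
  rcases Fin.eq_zero_or_eq_succ g with hg | ⟨g0, hg⟩
  · subst hg
    have hf : ∀ (g' : Fin i) (j : Fin 3), m.1 (g', j) = 0 := by
      intro g' j
      have hzq := hz g'.succ (Fin.succ_ne_zero _)
      fin_cases j
      · have := hzq 0; rwa [enc_succ] at this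
      · have := hzq 1; rwa [enc_succ] at this
      · have := hzq 2; rwa [enc_succ] at this
    have hA : AA i m.1 = 0 := Finset.sum_eq_zero fun g' _ => by
      simp [grpA, hf, am_zero, a2_zero]
    have hB : BB i m.1 = 0 := Finset.sum_eq_zero fun g' _ => by
      simp [grpB, hf, am_zero, a2_zero]
    have hval : ∀ q, enc i m (0, q) = m.2 := by
      intro q
      rw [enc_zero]
      fin_cases q <;> simp [hA, hB, am_zero, a2_zero]
    intro q
    rw [hval q]
    rw [hval p] at hgp
    exact hgp
  · subst hg
    have hsz : ∀ q, enc i m (0, q) = 0 := hz 0 (Fin.succ_ne_zero g0).symm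
    have ht : m.2 = 0 := by have := hsz 1; rwa [enc_zero] at this
    have h0 : AA i m.1 + BB i m.1 = 0 := by
      have := hsz 0; rw [enc_zero] at this
      have : m.2 + AA i m.1 + BB i m.1 = 0 := this
      rwa [ht, zero_add] at this
    have h2 : am (AA i m.1) + a2 (BB i m.1) = 0 := by
      have := hsz 2; rw [enc_zero] at this
      have : m.2 + am (AA i m.1) + a2 (BB i m.1) = 0 := this
      rwa [ht, zero_add] at this
    obtain ⟨hA0, hB0⟩ := AB_zero _ _ h0 h2
    have hfz : ∀ h', h' ≠ g0 → ∀ (j : Fin 3), m.1 (h', j) = 0 := by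
      intro h' hne j
      have hzq := hz h'.succ (by simpa [Fin.succ_inj] using hne)
      fin_cases j
      · have := hzq 0; rwa [enc_succ] at this
      · have := hzq 1; rwa [enc_succ] at this
      · have := hzq 2; rwa [enc_succ] at this
    have hAg : grpA (fun j => m.1 (g0, j)) = 0 := by
      rw [← hA0, AA, Finset.sum_eq_single g0
        (fun b _ hb => by simp [grpA, hfz b hb, am_zero, a2_zero])
        (fun h => absurd (Finset.mem_univ g0) h)]
    have hBg : grpB (fun j => m.1 (g0, j)) = 0 := by
      rw [← hB0, BB, Finset.sum_eq_single g0
        (fun b _ hb => by simp [grpB, hfz b hb, am_zero, a2_zero])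
        (fun h => absurd (Finset.mem_univ g0) h)]
    obtain ⟨hab, hbc⟩ := grp_eq (m.1 (g0,0)) (m.1 (g0,1)) (m.1 (g0,2)) hAg hBg
    have hval : ∀ q, enc i m (g0.succ, q) = m.1 (g0, 0) := by
      intro q
      rw [enc_succ]
      fin_cases q
      · rfl
      · exact hab.symm
      · exact (hab.trans hbc).symm
      · show m.1 (g0,0) + m.1 (g0,1) + m.1 (g0,2) = m.1 (g0,0)
        rw [← hbc, ← hab, v2_add_self, zero_add]
    intro q
    rw [hval q]
    rw [hval p] at hgp
    exact hgp
end

section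
variable {i : ℕ}

lemma enc_norm_ge (m : (Fin i × Fin 3 → V2) × V2) (hm : enc i m ≠ 0) :
    4 ≤ hammingNorm (enc i m) := by
  set c := enc i m with hc
  obtain ⟨x, hx⟩ : ∃ x, c x ≠ 0 := by
    by_contra h
    push_neg at h
    exact hm (funext h)
  obtain ⟨g, p⟩ := x
  have hN : hammingNorm c = (Finset.univ.filter fun x => c x ≠ 0).card := rfl
  by_cases hsingle : ∃ g2, g2 ≠ g ∧ ∃ q, c (g2, q) ≠ 0
  · obtain ⟨g2, hg2, q, hq⟩ := hsingle
    obtain ⟨p2, hp2, hp2n⟩ := exists_second (fun r => c (g, r))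
      (enc_group_parity m g) p hx
    obtain ⟨q2, hq2, hq2n⟩ := exists_second (fun r => c (g2, r))
      (enc_group_parity m g2) q hq
    have hle := Finset.card_le_card_of_injOn
      (f := fun a : Fin 4 => (![(g,p),(g,p2),(g2,q),(g2,q2)] a : Fin (i+1) × Fin 4))
      (s := Finset.univ) (t := Finset.univ.filter fun x => c x ≠ 0)
      (by intro a _; fin_cases a <;> simp_all)
      (by
        intro a _ b _ hab
        fin_cases a <;> fin_cases b <;>
          simp_all [Prod.ext_iff] <;>
          first
            | rfl
            | (exact absurd hab.1.symm hg2)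
            | (exact absurd hab.1 hg2)
            | (exact absurd hab.2 hp2)
            | (exact absurd hab.2.symm hp2)
            | (exact absurd hab.2 hq2)
            | (exact absurd hab.2.symm hq2))
    simpa [hN] using hle
  · push_neg at hsingle
    have hall : ∀ q, c (g, q) ≠ 0 :=
      group_all_nonzero m g p hx (fun g2 h q => hsingle g2 h q)
    have hle := Finset.card_le_card_of_injOn
      (f := fun a : Fin 4 => ((g, a) : Fin (i+1) × Fin 4))
      (s := Finset.univ) (t := Finset.univ.filter fun x => c x ≠ 0)
      (by intro a _; simp [hall a])
      (by intro a _ b _ hab; exact (Prod.ext_iff.mp hab).2)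
    simpa [hN] using hle
end

section
variable {i : ℕ}

noncomputable def m4 (i : ℕ) : (Fin i × Fin 3 → V2) × V2 := (0, ((1 : ZMod 2), (0 : ZMod 2)))

lemma AA_zero : AA i 0 = 0 := Finset.sum_eq_zero fun g _ => by
  simp [grpA, am_zero, a2_zero]
lemma BB_zero : BB i 0 = 0 := Finset.sum_eq_zero fun g _ => by
  simp [grpB, am_zero, a2_zero]

lemma m4_val : ∀ x : Fin (i+1) × Fin 4, enc i (m4 i) x =
    if x.1 = 0 then ((1 : ZMod 2), (0 : ZMod 2)) else 0 := by
  intro ⟨g, p⟩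
  induction g using Fin.cases with
  | zero =>
    rw [enc_zero]
    simp only [m4, AA_zero, BB_zero, am_zero, a2_zero, if_pos rfl]
    fin_cases p <;> simp
  | succ g =>
    rw [enc_succ]
    rw [if_neg (Fin.succ_ne_zero g)]
    fin_cases p <;> simp [m4]

lemma m4_ne : enc i (m4 i) ≠ 0 := by
  intro h
  have := congrFun h ((0 : Fin (i+1)), (0 : Fin 4))
  rw [m4_val] at this
  simp [Prod.ext_iff] at this

lemma m4_norm : hammingNorm (enc i (m4 i)) = 4 := by
  have hN : hammingNorm (enc i (m4 i)) =
      (Finset.univ.filter fun x => enc i (m4 i) x ≠ 0).card := rfl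
  have hset : (Finset.univ.filter fun x : Fin (i+1) × Fin 4 => enc i (m4 i) x ≠ 0) =
      Finset.univ.map ⟨fun p : Fin 4 => ((0 : Fin (i+1)), p),
        fun a b h => congrArg Prod.snd h⟩ := by
    ext ⟨g, p⟩
    simp only [Finset.mem_filter, Finset.mem_univ, true_and, Finset.mem_map,
      Function.Embedding.coeFn_mk, m4_val]
    constructor
    · intro h
      by_cases hg : g = 0
      · exact ⟨p, by rw [hg]; rfl⟩
      · simp [hg] at h
    · rintro ⟨q, hq⟩
      have : g = 0 ∧ q = p := by
        constructor
        · exact (congrArg Prod.fst hq).symm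
        · exact congrArg Prod.snd hq
      rw [if_pos this.1]
      simp
  rw [hN, hset, Finset.card_map, Finset.card_univ, Fintype.card_fin]
end

section
variable (i : ℕ)

def eqv : Fin (4*i+4) ≃ Fin (i+1) × Fin 4 :=
  (finCongr (by ring : 4*i+4 = (i+1)*4)).trans finProdFinEquiv.symm

noncomputable def lin : ((Fin (i+1) × Fin 4) → V2) ≃ₗ[ZMod 2] (Fin (4*i+4) → V2) :=
  LinearEquiv.funCongrLeft (ZMod 2) V2 (eqv i)

variable {i}

lemma lin_apply (x : (Fin (i+1) × Fin 4) → V2) : lin i x = x ∘ eqv i := rfl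

lemma norm_comp (x : (Fin (i+1) × Fin 4) → V2) :
    hammingNorm (x ∘ eqv i) = hammingNorm x := by
  have : hammingNorm (x ∘ eqv i) =
      (Finset.univ.filter fun j => x (eqv i j) ≠ 0).card := rfl
  rw [this]
  have : hammingNorm x = (Finset.univ.filter fun y => x y ≠ 0).card := rfl
  rw [this]
  exact Finset.card_equiv (eqv i) (fun a => by simp)

lemma card_group (g : Fin (i+1)) :
    (Finset.univ.filter fun x : Fin (i+1) × Fin 4 => x.1 = g).card = 4 := by
  have hset : (Finset.univ.filter fun x : Fin (i+1) × Fin 4 => x.1 = g) =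
      Finset.univ.map ⟨fun p : Fin 4 => (g, p), fun a b h => congrArg Prod.snd h⟩ := by
    ext ⟨g', p⟩
    simp only [Finset.mem_filter, Finset.mem_univ, true_and, Finset.mem_map,
      Function.Embedding.coeFn_mk]
    constructor
    · intro h; exact ⟨p, by rw [h]; rfl⟩
    · rintro ⟨q, hq⟩; exact (congrArg Prod.fst hq).symm
  rw [hset, Finset.card_map, Finset.card_univ, Fintype.card_fin]
end



/-- A vector-linear `(n, k, d, r)`-LRC over the alphabet `𝔽₂² = ZMod 2 × ZMod 2`:
an `𝔽₂`-linear subspace `C ⊆ (𝔽₂²)ⁿ` with `|C| = 4^k`, whose minimum Hamming distance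
over the alphabet `𝔽₂²` is exactly `d`, and such that every coordinate `j` has a repair
set `S` with `j ∈ S`, `|S| ≤ r + 1`, for which the projection of `C` to the coordinates
in `S` has minimum Hamming distance at least `2`. -/
def IsVectorLinearLRC (n k d r : ℕ) : Prop :=
  ∃ C : Submodule (ZMod 2) (Fin n → ZMod 2 × ZMod 2),
    Nat.card ↥C = 4 ^ k ∧
    (∀ c ∈ C, c ≠ 0 → d ≤ hammingNorm c) ∧
    (∃ c ∈ C, c ≠ 0 ∧ hammingNorm c = d) ∧
    (∀ j : Fin n, ∃ S : Finset (Fin n), j ∈ S ∧ S.card ≤ r + 1 ∧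
      ∀ c ∈ C, ∀ c' ∈ C, (∃ i ∈ S, c i ≠ c' i) →
        2 ≤ (S.filter (fun i => c i ≠ c' i)).card)


theorem stmt_12 (i : ℕ) (hi : 1 ≤ i) :
    IsVectorLinearLRC (4 * i + 4) (3 * i + 1) 4 3 ∧
      (4 : ℤ) = ((4 * i + 4 : ℕ) : ℤ) - ((3 * i + 1 : ℕ) : ℤ) - ((((3 * i + 1) + 3 - 1) / 3 : ℕ) : ℤ) + 2 := by
  constructor
  · refine ⟨Submodule.map (lin i : ((Fin (i+1) × Fin 4) → V2) →ₗ[ZMod 2] _)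
      (LinearMap.range (encL i)), ?_, ?_, ?_, ?_⟩
    · -- cardinality
      have e1 := (LinearEquiv.ofInjective (encL i) encL_inj).toEquiv
      have e2 := ((lin i).submoduleMap (LinearMap.range (encL i))).toEquiv
      rw [← Nat.card_congr e2, ← Nat.card_congr e1, Nat.card_eq_fintype_card]
      rw [Fintype.card_prod, Fintype.card_fun, Fintype.card_prod, Fintype.card_prod,
        ZMod.card, Fintype.card_fin, Fintype.card_fin]
      show (2 * 2) ^ (i * 3) * (2 * 2) = 4 ^ (3 * i + 1)
      rw [pow_succ, mul_comm i 3]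
    · -- min distance lower bound
      rintro c hc hc0
      obtain ⟨y, hy, rfl⟩ := Submodule.mem_map.mp hc
      obtain ⟨m, rfl⟩ := LinearMap.mem_range.mp hy
      show 4 ≤ hammingNorm (enc i m ∘ eqv i)
      rw [norm_comp]
      apply enc_norm_ge
      intro h0
      apply hc0
      rw [show (encL i) m = enc i m from rfl, h0]
      exact map_zero _
    · -- weight-4 codeword
      refine ⟨lin i (enc i (m4 i)), Submodule.mem_map.mpr
        ⟨enc i (m4 i), LinearMap.mem_range.mpr ⟨m4 i, rfl⟩, rfl⟩, ?_, ?_⟩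
      · intro h
        apply m4_ne (i := i)
        have := (lin i).injective (a₁ := enc i (m4 i)) (a₂ := 0)
        simpa using this (by rw [h, map_zero])
      · rw [lin_apply, norm_comp, m4_norm]
    · -- locality
      intro j
      refine ⟨Finset.univ.filter fun j' => (eqv i j').1 = (eqv i j).1, by simp, ?_, ?_⟩
      · have : (Finset.univ.filter fun j' => (eqv i j').1 = (eqv i j).1).card =
            (Finset.univ.filter fun x : Fin (i+1) × Fin 4 => x.1 = (eqv i j).1).card :=
          Finset.card_equiv (eqv i) (fun a => by simp)
        rw [this, card_group]
      · rintro c hc c' hc' ⟨j0, hj0S, hj0⟩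
        obtain ⟨y, hy, rfl⟩ := Submodule.mem_map.mp hc
        obtain ⟨mm, rfl⟩ := LinearMap.mem_range.mp hy
        obtain ⟨y', hy', rfl⟩ := Submodule.mem_map.mp hc'
        obtain ⟨mm', rfl⟩ := LinearMap.mem_range.mp hy'
        set g := (eqv i j).1 with hg
        -- difference codeword
        set dm := mm - mm' with hdm
        have hdval : ∀ x : Fin (4*i+4),
            lin i ((encL i) mm) x - lin i ((encL i) mm') x = enc i dm (eqv i x) := by
          intro x
          exact (congrFun (map_sub (encL i) mm mm') ((eqv i) x)).symm
        have hj0mem : (eqv i j0).1 = g := by simpa using hj0S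
        have hd0 : enc i dm ((eqv i j0)) ≠ 0 := by
          rw [← hdval j0]
          exact sub_ne_zero_of_ne hj0
        have hd0' : enc i dm (g, (eqv i j0).2) ≠ 0 := by
          have heq : ((g, ((eqv i) j0).2) : Fin (i+1) × Fin 4) = (eqv i) j0 := by
            rw [← hj0mem]
          rwa [heq]
        obtain ⟨q, hq, hqn⟩ := exists_second (fun r => enc i dm (g, r))
          (enc_group_parity dm g) (eqv i j0).2 hd0'
        set j1 := (eqv i).symm (g, q) with hj1
        have hj1val : eqv i j1 = (g, q) := (eqv i).apply_symm_apply _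
        have hne : j0 ≠ j1 := by
          intro h
          apply hq
          have := congrArg (fun z => (eqv i z).2) h
          simp only [hj1val] at this
          exact this.symm
        have hj1c : lin i ((encL i) mm) j1 ≠ lin i ((encL i) mm') j1 := by
          intro h
          apply hqn
          rw [← hj1val, ← hdval j1, h, sub_self]
        have h2 : 1 < ((Finset.univ.filter fun j' => (eqv i j').1 = g).filter
            fun idx => lin i ((encL i) mm) idx ≠ lin i ((encL i) mm') idx).card := by
          apply Finset.one_lt_card.mpr
          refine ⟨j0, Finset.mem_filter.mpr ⟨hj0S, hj0⟩, j1,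
            Finset.mem_filter.mpr ⟨?_, hj1c⟩, hne⟩
          simp only [Finset.mem_filter, Finset.mem_univ, true_and, hj1val]
        exact h2
  · have h3 : ((3 * i + 1) + 3 - 1) / 3 = i + 1 := by omega
    rw [h3]
    push_cast
    ring
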